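/- The deterministic one-way three-party NOF communication complexity of three-party set disjointness DISJ_3(x,y,z) := ⋀_{i=1}^n (¬z_i ∨ ¬x_i ∨ ¬y_i) is Ω(n). Concretely: for every deterministic one-way NOF protocol with communication cost at most δn (for a sufficiently small constant δ > 0 and n sufficiently large), there exist x*, y*, z_0*, z_1* ∈ {0,1}^n such that the protocol's first two players produce identical messages on inputs (x*, y*, z_0*) and (x*, y*, z_1*), yet DISJ_3(x*, y*, z_0*) ≠ DISJ_3(x*, y*, z_1*). -/

import Mathlib

set_option maxHeartbeats 1600000

open Finset

namespace Stmt18Aux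


variable {n : ℕ}

def bp3 : Finset (Bool × Bool) := {(false, false), (true, false), (false, true)}

lemma mem_bp3 (b : Bool × Bool) : b ∈ bp3 ↔ ¬(b.1 = true ∧ b.2 = true) := by
  obtain ⟨x, y⟩ := b
  cases x <;> cases y <;> simp [bp3]

lemma card_disj_pairs (S : Finset (Fin n)) :
    ((Finset.univ : Finset ((Fin n → Bool) × (Fin n → Bool))).filter
      (fun p => (∀ i, ¬(p.1 i = true ∧ p.2 i = true)) ∧
        ∀ i, i ∉ S → (p.1 i = false ∧ p.2 i = false))).card = 3 ^ S.card := by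
  classical
  have hbij :
      ((Finset.univ : Finset ((Fin n → Bool) × (Fin n → Bool))).filter
        (fun p => (∀ i, ¬(p.1 i = true ∧ p.2 i = true)) ∧
          ∀ i, i ∉ S → (p.1 i = false ∧ p.2 i = false))).card
      = (Fintype.piFinset (fun i : Fin n => if i ∈ S then bp3 else ({(false, false)} : Finset (Bool × Bool)))).card := by
    refine Finset.card_bij' (fun p _ => fun i => (p.1 i, p.2 i))
      (fun f _ => (fun i => (f i).1, fun i => (f i).2)) ?_ ?_ ?_ ?_
    · intro p hp
      rw [Finset.mem_filter] at hp
      rw [Fintype.mem_piFinset]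
      intro i
      by_cases h : i ∈ S
      · rw [if_pos h, mem_bp3]
        exact hp.2.1 i
      · rw [if_neg h, Finset.mem_singleton]
        have := hp.2.2 i h
        exact Prod.ext this.1 this.2
    · intro f hf
      rw [Fintype.mem_piFinset] at hf
      rw [Finset.mem_filter]
      refine ⟨Finset.mem_univ _, ?_, ?_⟩
      · intro i
        have := hf i
        by_cases h : i ∈ S
        · rw [if_pos h, mem_bp3] at this; exact this
        · rw [if_neg h, Finset.mem_singleton] at this
          simp [this]
      · intro i hi
        have := hf i
        rw [if_neg hi, Finset.mem_singleton] at this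
        simp [this]
    · intro p _
      exact Prod.ext rfl rfl
    · intro f _
      funext i
      exact Prod.ext rfl rfl
  rw [hbij, Fintype.card_piFinset]
  have h1 : ∀ i : Fin n, (if i ∈ S then bp3 else ({(false, false)} : Finset (Bool × Bool))).card
      = (if i ∈ S then 3 else 1) := by
    intro i; by_cases h : i ∈ S <;> simp [h, bp3]
  rw [Finset.prod_congr rfl (fun i _ => h1 i)]
  rw [Finset.prod_ite_mem, Finset.univ_inter, Finset.prod_const]

lemma card_small_supp (U : Finset (Fin n)) :
    ((Finset.univ : Finset (Fin n → Bool)).filter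
      (fun x => ∀ i, i ∉ U → x i = false)).card = 2 ^ U.card := by
  classical
  have hbij :
      ((Finset.univ : Finset (Fin n → Bool)).filter
        (fun x => ∀ i, i ∉ U → x i = false)).card
      = (Fintype.piFinset (fun i : Fin n => if i ∈ U then (Finset.univ : Finset Bool) else ({false} : Finset Bool))).card := by
    refine Finset.card_bij' (fun x _ => x) (fun f _ => f) ?_ ?_ ?_ ?_
    · intro x hx
      rw [Finset.mem_filter] at hx
      rw [Fintype.mem_piFinset]
      intro i
      by_cases h : i ∈ U
      · rw [if_pos h]; exact Finset.mem_univ _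
      · rw [if_neg h, Finset.mem_singleton]
        exact hx.2 i h
    · intro f hf
      rw [Fintype.mem_piFinset] at hf
      rw [Finset.mem_filter]
      refine ⟨Finset.mem_univ _, fun i hi => ?_⟩
      have := hf i
      rwa [if_neg hi, Finset.mem_singleton] at this
    · intro _ _; rfl
    · intro _ _; rfl
  rw [hbij, Fintype.card_piFinset]
  have h1 : ∀ i : Fin n, (if i ∈ U then (Finset.univ : Finset Bool) else ({false} : Finset Bool)).card
      = (if i ∈ U then 2 else 1) := by
    intro i; by_cases h : i ∈ U <;> simp [h]
  rw [Finset.prod_congr rfl (fun i _ => h1 i)]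
  rw [Finset.prod_ite_mem, Finset.univ_inter, Finset.prod_const]



def hdist (z z' : Fin n → Bool) : ℕ := (Finset.univ.filter (fun i => z i ≠ z' i)).card

lemma card_small_sets (D : ℕ) :
    (((Finset.univ : Finset (Fin n)).powerset).filter (fun t => t.card ≤ D)).card
      = ∑ k ∈ range (D + 1), n.choose k := by
  classical
  have hset : (((Finset.univ : Finset (Fin n)).powerset).filter (fun t => t.card ≤ D))
      = (range (D + 1)).biUnion (fun k => powersetCard k (Finset.univ : Finset (Fin n))) := by
    ext t
    simp only [mem_filter, mem_powerset, mem_biUnion, mem_range, mem_powersetCard, Nat.lt_succ_iff]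
    constructor
    · rintro ⟨hsub, hcard⟩; exact ⟨t.card, hcard, hsub, rfl⟩
    · rintro ⟨k, hk, hsub, hcard⟩; exact ⟨hsub, hcard ▸ hk⟩
  rw [hset, Finset.card_biUnion]
  · apply Finset.sum_congr rfl
    intro k _
    rw [Finset.card_powersetCard, Finset.card_univ, Fintype.card_fin]
  · intro i _ j _ hij
    rw [Function.onFun, Finset.disjoint_left]
    intro t hti htj
    rw [mem_powersetCard] at hti htj
    exact hij (hti.2 ▸ htj.2)

lemma card_ball (z : Fin n → Bool) (D : ℕ) :
    ((Finset.univ : Finset (Fin n → Bool)).filter (fun z' => hdist z z' ≤ D)).card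
      ≤ ∑ k ∈ range (D + 1), n.choose k := by
  classical
  rw [← card_small_sets]
  apply Finset.card_le_card_of_injOn (fun z' => Finset.univ.filter (fun i => z i ≠ z' i))
  · intro z' hz'
    rw [Finset.mem_coe, Finset.mem_filter] at hz' ⊢
    exact ⟨Finset.mem_powerset.2 (Finset.subset_univ _), hz'.2⟩
  · intro z1 h1 z2 h2 heq
    funext i
    by_cases h : z i ≠ z1 i
    · have : i ∈ Finset.univ.filter (fun j => z j ≠ z2 j) := by
        have heq' : Finset.univ.filter (fun i => z i ≠ z1 i) = Finset.univ.filter (fun i => z i ≠ z2 i) := heq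
        rw [← heq']; exact Finset.mem_filter.2 ⟨Finset.mem_univ _, h⟩
      have h2' := (Finset.mem_filter.1 this).2
      revert h h2'
      cases z i <;> cases z1 i <;> cases z2 i <;> simp
    · have h1' : z1 i = z i := by revert h; cases z i <;> cases z1 i <;> simp
      have : i ∉ Finset.univ.filter (fun j => z j ≠ z2 j) := by
        have heq' : Finset.univ.filter (fun i => z i ≠ z1 i) = Finset.univ.filter (fun i => z i ≠ z2 i) := heq
        rw [← heq']
        simp only [Finset.mem_filter, Finset.mem_univ, true_and]
        exact fun hc => h hc
      simp only [Finset.mem_filter, Finset.mem_univ, true_and, not_not] at this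
      rw [h1', ← this]

lemma sum_choose_bound {D : ℕ} (hD : D ≤ n) :
    (∑ k ∈ range (D + 1), n.choose k) * 2 ^ n ≤ 3 ^ n * 2 ^ D := by
  have h3 : ∑ k ∈ range (n + 1), n.choose k * 2 ^ (n - k) = 3 ^ n := by
    have h := add_pow (1 : ℕ) 2 n
    norm_num at h
    rw [h]
    apply Finset.sum_congr rfl
    intro k _
    ring
  calc (∑ k ∈ range (D + 1), n.choose k) * 2 ^ n
      = ∑ k ∈ range (D + 1), n.choose k * 2 ^ n := by rw [Finset.sum_mul]
    _ ≤ ∑ k ∈ range (D + 1), n.choose k * 2 ^ (n - k) * 2 ^ D := by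
        apply Finset.sum_le_sum
        intro k hk
        rw [mem_range, Nat.lt_succ_iff] at hk
        have hkn : k ≤ n := le_trans hk hD
        rw [mul_assoc, ← pow_add]
        apply Nat.mul_le_mul_left
        apply Nat.pow_le_pow_right (by norm_num)
        omega
    _ = (∑ k ∈ range (D + 1), n.choose k * 2 ^ (n - k)) * 2 ^ D := by rw [Finset.sum_mul]
    _ ≤ (∑ k ∈ range (n + 1), n.choose k * 2 ^ (n - k)) * 2 ^ D := by
        apply Nat.mul_le_mul_right
        apply Finset.sum_le_sum_of_subset
        apply Finset.range_subset_range.2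
        omega
    _ = 3 ^ n * 2 ^ D := by rw [h3]

lemma pow43 (m : ℕ) : 3 ^ m * 4 ^ (m / 5) ≤ 4 ^ m := by
  have aux : ∀ q, 3 ^ (5 * q) * 4 ^ q ≤ 4 ^ (5 * q) := by
    intro q
    induction q with
    | zero => simp
    | succ q ih =>
      have e1 : 5 * (q + 1) = 5 * q + 5 := by ring
      rw [e1, pow_add, pow_add, pow_succ]
      calc 3 ^ (5 * q) * 3 ^ 5 * (4 ^ q * 4) = 3 ^ (5 * q) * 4 ^ q * (3 ^ 5 * 4) := by ring
        _ ≤ 4 ^ (5 * q) * (3 ^ 5 * 4) := Nat.mul_le_mul_right _ ih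
        _ ≤ 4 ^ (5 * q) * 4 ^ 5 := by
            apply Nat.mul_le_mul_left
            norm_num
        _ = 4 ^ (5 * q + 5) := by rw [pow_add]
  have hm : m = 5 * (m / 5) + m % 5 := (Nat.div_add_mod m 5).symm
  calc 3 ^ m * 4 ^ (m / 5) = 3 ^ (5 * (m / 5)) * 3 ^ (m % 5) * 4 ^ (m / 5) := by
        rw [← pow_add, ← hm]
    _ = 3 ^ (5 * (m / 5)) * 4 ^ (m / 5) * 3 ^ (m % 5) := by ring
    _ ≤ 4 ^ (5 * (m / 5)) * 3 ^ (m % 5) := Nat.mul_le_mul_right _ (aux _)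
    _ ≤ 4 ^ (5 * (m / 5)) * 4 ^ (m % 5) := by
        apply Nat.mul_le_mul_left
        exact Nat.pow_le_pow_left (by norm_num) _
    _ = 4 ^ m := by rw [← pow_add, ← hm]

/-- If a rectangle `X ×ˢ Y` contains no pair whose (nonempty) intersection is inside `W`,
then it contains few disjoint pairs. -/
lemma rect_bound (X Y : Finset (Fin n → Bool)) (W : Finset (Fin n))
    (H : ∀ x ∈ X, ∀ y ∈ Y, (∀ i, x i = true → y i = true → i ∈ W) →
          ∀ i, ¬(x i = true ∧ y i = true)) :
    ((X ×ˢ Y).filter (fun p => ∀ i, ¬(p.1 i = true ∧ p.2 i = true))).card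
      ≤ 3 ^ (n - W.card) * 2 ^ W.card := by
  classical
  set S := (X ×ˢ Y).filter (fun p => ∀ i, ¬(p.1 i = true ∧ p.2 i = true)) with hS
  set φ : ((Fin n → Bool) × (Fin n → Bool)) → ((Fin n → Bool) × (Fin n → Bool)) :=
    fun p => (fun i => if i ∈ W then false else p.1 i,
              fun i => if i ∈ W then false else p.2 i) with hφ
  set OFF := (Finset.univ : Finset ((Fin n → Bool) × (Fin n → Bool))).filter
      (fun p => (∀ i, ¬(p.1 i = true ∧ p.2 i = true)) ∧
        ∀ i, i ∉ Wᶜ → (p.1 i = false ∧ p.2 i = false)) with hOFF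
  have hmaps : ∀ p ∈ S, φ p ∈ OFF := by
    intro p hp
    rw [hS, Finset.mem_filter] at hp
    rw [hOFF, Finset.mem_filter]
    refine ⟨Finset.mem_univ _, ?_, ?_⟩
    · intro i
      by_cases h : i ∈ W
      · simp [hφ, h]
      · simp only [hφ, h, if_neg, not_false_iff]
        exact hp.2 i
    · intro i hi
      rw [Finset.notMem_compl] at hi
      simp [hφ, hi]
  have hfib : ∀ uv ∈ OFF, (S.filter (fun p => φ p = uv)).card ≤ 2 ^ W.card := by
    rintro ⟨u, v⟩ huv
    rw [hOFF, Finset.mem_filter] at huv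
    set Fb := S.filter (fun p => φ p = (u, v)) with hFb
    have hFbX : ∀ p ∈ Fb, p.1 ∈ X ∧ p.2 ∈ Y := by
      intro p hp
      rw [hFb, Finset.mem_filter, hS, Finset.mem_filter, Finset.mem_product] at hp
      exact hp.1.1
    have hFboff : ∀ p ∈ Fb, ∀ i, i ∉ W → (p.1 i = u i ∧ p.2 i = v i) := by
      intro p hp i hi
      rw [hFb, Finset.mem_filter] at hp
      have h2 := hp.2
      rw [Prod.ext_iff] at h2
      constructor
      · have h3 := congrFun h2.1 i
        simp only [hφ, if_neg hi] at h3
        exact h3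
      · have h3 := congrFun h2.2 i
        simp only [hφ, if_neg hi] at h3
        exact h3
    set U := W.filter (fun i => ∃ p ∈ Fb, p.1 i = true) with hU
    set Vv := W.filter (fun i => ∃ p ∈ Fb, p.2 i = true) with hVv
    have hUVdisj : Disjoint U Vv := by
      rw [Finset.disjoint_left]
      intro i hiU hiV
      rw [hU, Finset.mem_filter] at hiU
      rw [hVv, Finset.mem_filter] at hiV
      obtain ⟨p, hp, hpi⟩ := hiU.2
      obtain ⟨q, hq, hqi⟩ := hiV.2
      have hcross : ∀ j, p.1 j = true → q.2 j = true → j ∈ W := by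
        intro j h1 h2
        by_contra hjW
        have e1 := (hFboff p hp j hjW).1
        have e2 := (hFboff q hq j hjW).2
        have hnj : ¬(u j = true ∧ v j = true) := huv.2.1 j
        exact hnj ⟨e1 ▸ h1, e2 ▸ h2⟩
      exact H p.1 (hFbX p hp).1 q.2 (hFbX q hq).2 hcross i ⟨hpi, hqi⟩
    have hcardle : Fb.card ≤ 2 ^ U.card * 2 ^ Vv.card := by
      have hc : Fb.card ≤
          (((Finset.univ : Finset (Fin n → Bool)).filter (fun x => ∀ i, i ∉ U → x i = false)) ×ˢ
           ((Finset.univ : Finset (Fin n → Bool)).filter (fun x => ∀ i, i ∉ Vv → x i = false))).card := by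
        apply Finset.card_le_card_of_injOn
          (fun p => (fun i => if i ∈ W then p.1 i else false,
                     fun i => if i ∈ W then p.2 i else false))
        · intro p hp
          rw [Finset.mem_coe, Finset.mem_product]
          constructor
          · rw [Finset.mem_filter]
            refine ⟨Finset.mem_univ _, fun i hi => ?_⟩
            by_cases h : i ∈ W
            · simp only [if_pos h]
              by_contra hx
              have hx' : p.1 i = true := by
                revert hx; cases p.1 i <;> simp
              exact hi (by rw [hU, Finset.mem_filter]; exact ⟨h, p, hp, hx'⟩)
            · simp only [if_neg h]
          · rw [Finset.mem_filter]
            refine ⟨Finset.mem_univ _, fun i hi => ?_⟩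
            by_cases h : i ∈ W
            · simp only [if_pos h]
              by_contra hx
              have hx' : p.2 i = true := by
                revert hx; cases p.2 i <;> simp
              exact hi (by rw [hVv, Finset.mem_filter]; exact ⟨h, p, hp, hx'⟩)
            · simp only [if_neg h]
        · intro p hp q hq heq
          have hp' : p ∈ Fb := by simpa using hp
          have hq' : q ∈ Fb := by simpa using hq
          simp only [Prod.ext_iff] at heq
          apply Prod.ext
          · funext i
            by_cases h : i ∈ W
            · have h3 := congrFun heq.1 i
              simpa [h] using h3
            · rw [(hFboff p hp' i h).1, (hFboff q hq' i h).1]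
          · funext i
            by_cases h : i ∈ W
            · have h3 := congrFun heq.2 i
              simpa [h] using h3
            · rw [(hFboff p hp' i h).2, (hFboff q hq' i h).2]
      calc Fb.card ≤ _ := hc
        _ = 2 ^ U.card * 2 ^ Vv.card := by
            rw [Finset.card_product, card_small_supp, card_small_supp]
    calc (S.filter (fun p => φ p = (u, v))).card = Fb.card := by rw [hFb]
      _ ≤ 2 ^ U.card * 2 ^ Vv.card := hcardle
      _ = 2 ^ (U.card + Vv.card) := by rw [pow_add]
      _ = 2 ^ (U ∪ Vv).card := by rw [Finset.card_union_of_disjoint hUVdisj]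
      _ ≤ 2 ^ W.card := by
          apply Nat.pow_le_pow_right (by norm_num)
          apply Finset.card_le_card
          apply Finset.union_subset
          · rw [hU]; exact Finset.filter_subset _ _
          · rw [hVv]; exact Finset.filter_subset _ _
  have hOFFcard : OFF.card = 3 ^ (n - W.card) := by
    rw [hOFF, card_disj_pairs Wᶜ, Finset.card_compl]
    congr 1
    rw [Fintype.card_fin]
  calc S.card = ∑ uv ∈ OFF, (S.filter (fun p => φ p = uv)).card :=
        Finset.card_eq_sum_card_fiberwise hmaps
    _ ≤ ∑ _uv ∈ OFF, 2 ^ W.card := Finset.sum_le_sum hfib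
    _ = OFF.card * 2 ^ W.card := by rw [Finset.sum_const, smul_eq_mul]
    _ = 3 ^ (n - W.card) * 2 ^ W.card := by rw [hOFFcard]


end Stmt18Aux

open Stmt18Aux in

theorem stmt_18 : ∃ δ : ℝ, 0 < δ ∧ ∃ N : ℕ, ∀ n : ℕ, N ≤ n →
    ∀ (a b : ℕ)
      (mA : (Fin n → Bool) → (Fin n → Bool) → Fin (2^a))
      (mB : (Fin n → Bool) → (Fin n → Bool) → Fin (2^a) → Fin (2^b)),
      ((a : ℝ) + b) ≤ δ * n →
      ∃ x y z₀ z₁ : Fin n → Bool,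
        mA y z₀ = mA y z₁ ∧
        mB x z₀ (mA y z₀) = mB x z₁ (mA y z₁) ∧
        ¬ ((∀ i, ¬(x i = true ∧ y i = true ∧ z₀ i = true)) ↔
           (∀ i, ¬(x i = true ∧ y i = true ∧ z₁ i = true))) := by
  classical
  refine ⟨1/100, by norm_num, 1000, ?_⟩
  intro n hn a b mA mB hab
  -- numeric setup
  set c := a + b with hc
  have hcn : 100 * c ≤ n := by
    have h1 : ((a : ℝ) + b) ≤ n / 100 := by
      rw [div_eq_mul_inv]; linarith [hab]
    have h2 : ((100 * c : ℕ) : ℝ) ≤ (n : ℝ) := by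
      push_cast [hc]; linarith
    exact_mod_cast h2
  set D := 24 * c + 24 with hD
  set w := 12 * c + 12 with hw
  have hDn : D ≤ n := by omega
  have hwn : w ≤ n := by omega
  have hn1 : 1 ≤ n := by omega
  set K := 2 ^ c with hK
  have hKpos : 0 < K := by rw [hK]; positivity
  set Vn := ∑ k ∈ range (D + 1), n.choose k with hVn
  -- numeric fact (N1)
  have hexp : c + D + 1 ≤ 2 * (n / 5) := by omega
  have hN1 : 2 * (K * (2 ^ n * Vn)) ≤ 2 ^ (2 * n) := by
    have hV2 : Vn * 2 ^ n ≤ 3 ^ n * 2 ^ D := sum_choose_bound hDn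
    calc 2 * (K * (2 ^ n * Vn)) = (Vn * 2 ^ n) * 2 ^ (c + 1) := by
          rw [hK, pow_succ]; ring
      _ ≤ (3 ^ n * 2 ^ D) * 2 ^ (c + 1) := Nat.mul_le_mul_right _ hV2
      _ = 3 ^ n * 2 ^ (c + D + 1) := by rw [mul_assoc, ← pow_add]; ring_nf
      _ ≤ 3 ^ n * 2 ^ (2 * (n / 5)) := by
          apply Nat.mul_le_mul_left
          exact Nat.pow_le_pow_right (by norm_num) hexp
      _ = 3 ^ n * 4 ^ (n / 5) := by rw [pow_mul]; norm_num
      _ ≤ 4 ^ n := pow43 n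
      _ = 2 ^ (2 * n) := by rw [pow_mul]; norm_num
  -- the transcript coloring
  set χ : (Fin n → Bool) → (Fin n → Bool) → (Fin n → Bool) → (Fin (2^a) × Fin (2^b)) :=
    fun x y z => (mA y z, mB x z (mA y z)) with hχ
  have hMcard : Fintype.card (Fin (2^a) × Fin (2^b)) = K := by
    rw [Fintype.card_prod, Fintype.card_fin, Fintype.card_fin, hK, hc, pow_add]
  have hVcard : (Finset.univ : Finset (Fin n → Bool)).card = 2 ^ n := by
    rw [Finset.card_univ, Fintype.card_fun, Fintype.card_bool, Fintype.card_fin]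
  -- Cauchy-Schwarz per pair (x,y)
  have hF : ∀ x y : Fin n → Bool,
      2 ^ (2 * n) ≤ K * ((Finset.univ ×ˢ Finset.univ).filter
        (fun zz : (Fin n → Bool) × (Fin n → Bool) => χ x y zz.1 = χ x y zz.2)).card := by
    intro x y
    set fib : (Fin (2^a) × Fin (2^b)) → Finset (Fin n → Bool) :=
      fun τ => Finset.univ.filter (fun z => χ x y z = τ) with hfib
    have hdecomp : (Finset.univ ×ˢ Finset.univ).filter
        (fun zz : (Fin n → Bool) × (Fin n → Bool) => χ x y zz.1 = χ x y zz.2)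
        = (Finset.univ : Finset (Fin (2^a) × Fin (2^b))).biUnion (fun τ => fib τ ×ˢ fib τ) := by
      ext zz
      constructor
      · intro h
        rw [Finset.mem_filter] at h
        rw [Finset.mem_biUnion]
        refine ⟨χ x y zz.2, Finset.mem_univ _, ?_⟩
        simp only [hfib]
        exact Finset.mem_product.2 ⟨Finset.mem_filter.2 ⟨Finset.mem_univ _, h.2⟩,
          Finset.mem_filter.2 ⟨Finset.mem_univ _, rfl⟩⟩
      · intro h
        rw [Finset.mem_biUnion] at h
        obtain ⟨τ, _, hτ⟩ := h
        simp only [hfib] at hτ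
        rw [Finset.mem_product, Finset.mem_filter, Finset.mem_filter] at hτ
        rw [Finset.mem_filter]
        exact ⟨Finset.mem_product.2 ⟨Finset.mem_univ _, Finset.mem_univ _⟩,
          hτ.1.2.trans hτ.2.2.symm⟩
    have hdisj : ∀ τ₁ ∈ (Finset.univ : Finset (Fin (2^a) × Fin (2^b))),
        ∀ τ₂ ∈ (Finset.univ : Finset (Fin (2^a) × Fin (2^b))), τ₁ ≠ τ₂ →
        Disjoint (fib τ₁ ×ˢ fib τ₁) (fib τ₂ ×ˢ fib τ₂) := by
      intro τ₁ _ τ₂ _ hne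
      rw [Finset.disjoint_left]
      intro zz h1 h2
      rw [Finset.mem_product, hfib, Finset.mem_filter, Finset.mem_filter] at h1 h2
      exact hne (h1.1.2 ▸ h2.1.2 ▸ rfl : τ₁ = τ₂)
    have hcardF : ((Finset.univ ×ˢ Finset.univ).filter
        (fun zz : (Fin n → Bool) × (Fin n → Bool) => χ x y zz.1 = χ x y zz.2)).card
        = ∑ τ : Fin (2^a) × Fin (2^b), (fib τ).card * (fib τ).card := by
      rw [hdecomp, Finset.card_biUnion hdisj]
      apply Finset.sum_congr rfl
      intro τ _
      rw [Finset.card_product]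
    have hsumfib : ∑ τ : Fin (2^a) × Fin (2^b), (fib τ).card = 2 ^ n := by
      rw [← hVcard]
      exact (Finset.card_eq_sum_card_fiberwise (fun z _ => Finset.mem_univ (χ x y z))).symm
    -- Cauchy-Schwarz over ℤ
    have hCS : ((2 : ℤ) ^ n) ^ 2 ≤ (K : ℤ) * ∑ τ : Fin (2^a) × Fin (2^b), ((fib τ).card : ℤ) ^ 2 := by
      have h := sq_sum_le_card_mul_sum_sq
        (s := (Finset.univ : Finset (Fin (2^a) × Fin (2^b))))
        (f := fun τ => ((fib τ).card : ℤ))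
      have h1 : (∑ τ : Fin (2^a) × Fin (2^b), ((fib τ).card : ℤ)) = ((2 : ℤ) ^ n) := by
        rw [← Nat.cast_sum, hsumfib]
        push_cast
        ring
      rw [h1] at h
      calc ((2:ℤ)^n)^2 ≤ (Finset.univ.card : ℤ) * ∑ τ, ((fib τ).card : ℤ)^2 := h
        _ = (K : ℤ) * ∑ τ, ((fib τ).card : ℤ)^2 := by
            rw [Finset.card_univ, hMcard]
    have := hCS
    rw [hcardF]
    have hfinal : (2:ℤ)^(2*n) ≤ (K : ℤ) * (((∑ τ : Fin (2^a) × Fin (2^b), (fib τ).card * (fib τ).card : ℕ) : ℤ)) := by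
      push_cast
      calc (2:ℤ)^(2*n) = ((2:ℤ)^n)^2 := by rw [← pow_mul]; ring_nf
        _ ≤ (K:ℤ) * ∑ τ, ((fib τ).card : ℤ)^2 := hCS
        _ = (K:ℤ) * ∑ τ, ((fib τ).card : ℤ) * ((fib τ).card : ℤ) := by
            congr 1; apply Finset.sum_congr rfl; intro τ _; ring
    exact_mod_cast hfinal
  -- close pairs bound
  set CP := (Finset.univ ×ˢ Finset.univ).filter
      (fun zz : (Fin n → Bool) × (Fin n → Bool) => hdist zz.1 zz.2 ≤ D) with hCPdef
  have hCP : CP.card ≤ 2 ^ n * Vn := by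
    have hmaps : ∀ zz ∈ CP, zz.1 ∈ (Finset.univ : Finset (Fin n → Bool)) :=
      fun zz _ => Finset.mem_univ _
    rw [Finset.card_eq_sum_card_fiberwise hmaps]
    calc ∑ z ∈ Finset.univ, (CP.filter (fun zz => zz.1 = z)).card
        ≤ ∑ _z ∈ (Finset.univ : Finset (Fin n → Bool)), Vn := by
          apply Finset.sum_le_sum
          intro z _
          rw [hVn]
          refine le_trans ?_ (card_ball z D)
          apply Finset.card_le_card_of_injOn (fun zz => zz.2)
          · intro zz hzz
            rw [Finset.mem_coe, Finset.mem_filter] at hzz ⊢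
            obtain ⟨hzz1, hzz2⟩ := hzz
            rw [hCPdef, Finset.mem_filter] at hzz1
            refine ⟨Finset.mem_univ _, ?_⟩
            rw [← hzz2]
            exact hzz1.2
          · intro p hp q hq heq
            rw [Finset.mem_coe, Finset.mem_filter] at hp hq
            have : p.1 = q.1 := by rw [hp.2, hq.2]
            exact Prod.ext this heq
      _ = 2 ^ n * Vn := by rw [Finset.sum_const, smul_eq_mul, hVcard]
  -- per-pair far monochromatic bound
  have hG : ∀ x y : Fin n → Bool,
      2 ^ (2 * n) ≤ 2 * (K * ((Finset.univ ×ˢ Finset.univ).filter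
        (fun zz : (Fin n → Bool) × (Fin n → Bool) =>
          χ x y zz.1 = χ x y zz.2 ∧ D < hdist zz.1 zz.2)).card) := by
    intro x y
    set F := (Finset.univ ×ˢ Finset.univ).filter
      (fun zz : (Fin n → Bool) × (Fin n → Bool) => χ x y zz.1 = χ x y zz.2) with hFdef
    set G := (Finset.univ ×ˢ Finset.univ).filter
      (fun zz : (Fin n → Bool) × (Fin n → Bool) =>
        χ x y zz.1 = χ x y zz.2 ∧ D < hdist zz.1 zz.2) with hGdef
    have hsplit : F.card ≤ G.card + CP.card := by
      have h1 := Finset.card_filter_add_card_filter_not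
        (s := F) (p := fun zz : (Fin n → Bool) × (Fin n → Bool) => D < hdist zz.1 zz.2)
      have h2 : F.filter (fun zz => D < hdist zz.1 zz.2) = G := by
        rw [hFdef, hGdef, Finset.filter_filter]
      have h3 : (F.filter (fun zz => ¬(D < hdist zz.1 zz.2))).card ≤ CP.card := by
        apply Finset.card_le_card
        intro zz hzz
        rw [Finset.mem_filter] at hzz
        obtain ⟨hzz1, hzz2⟩ := hzz
        rw [hFdef, Finset.mem_filter] at hzz1
        rw [hCPdef, Finset.mem_filter]
        exact ⟨hzz1.1, by omega⟩
      rw [h2] at h1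
      omega
    have h1 := hF x y
    have h2 : 2 * (K * CP.card) ≤ 2 ^ (2 * n) :=
      le_trans (by
        apply Nat.mul_le_mul_left
        exact Nat.mul_le_mul_left _ hCP) hN1
    have h4 : 2 * (K * F.card) ≤ 2 * (K * G.card) + 2 * (K * CP.card) := by
      have := Nat.mul_le_mul_left K hsplit
      calc 2 * (K * F.card) ≤ 2 * (K * G.card + K * CP.card) := by
            apply Nat.mul_le_mul_left
            rw [← Nat.mul_add]
            exact this
        _ = 2 * (K * G.card) + 2 * (K * CP.card) := by ring
    have h5 : 2 ^ (2*n) + 2 ^ (2*n) ≤ 2 * (K * G.card) + 2 ^ (2*n) := by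
      calc 2 ^ (2*n) + 2 ^ (2*n) = 2 * (2 ^ (2*n)) := by ring
        _ ≤ 2 * (K * F.card) := by
            apply Nat.mul_le_mul_left
            exact h1
        _ ≤ 2 * (K * G.card) + 2 * (K * CP.card) := h4
        _ ≤ 2 * (K * G.card) + 2 ^ (2*n) := by
            exact Nat.add_le_add_left h2 _
    exact Nat.le_of_add_le_add_right h5
  -- the set D0 of disjoint pairs
  set D0 := (Finset.univ ×ˢ Finset.univ).filter
    (fun p : (Fin n → Bool) × (Fin n → Bool) =>
      ∀ i, ¬(p.1 i = true ∧ p.2 i = true)) with hD0def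
  have hD0card : D0.card = 3 ^ n := by
    have h := card_disj_pairs (Finset.univ : Finset (Fin n))
    have heq : ((Finset.univ : Finset ((Fin n → Bool) × (Fin n → Bool))).filter
        (fun p => (∀ i, ¬(p.1 i = true ∧ p.2 i = true)) ∧
          ∀ i, i ∉ (Finset.univ : Finset (Fin n)) → (p.1 i = false ∧ p.2 i = false))) = D0 := by
      rw [hD0def, Finset.univ_product_univ]
      apply Finset.filter_congr
      intro p _
      simp
    rw [heq] at h
    rw [h, Finset.card_univ, Fintype.card_fin]
  -- global set A
  set A := (Finset.univ : Finset (((Fin n → Bool) × (Fin n → Bool)) × ((Fin n → Bool) × (Fin n → Bool)))).filter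
    (fun q => (∀ i, ¬(q.1.1 i = true ∧ q.1.2 i = true)) ∧
      χ q.1.1 q.1.2 q.2.1 = χ q.1.1 q.1.2 q.2.2 ∧ D < hdist q.2.1 q.2.2) with hAdef
  have hAmaps : ∀ q ∈ A, q.1 ∈ D0 := by
    intro q hq
    rw [hAdef, Finset.mem_filter] at hq
    rw [hD0def, Finset.mem_filter]
    exact ⟨Finset.mem_product.2 ⟨Finset.mem_univ _, Finset.mem_univ _⟩, hq.2.1⟩
  have htotal : 3 ^ n * 2 ^ (2 * n) ≤ 2 * (K * A.card) := by
    have hAsum : A.card = ∑ p ∈ D0, (A.filter (fun q => q.1 = p)).card :=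
      Finset.card_eq_sum_card_fiberwise hAmaps
    have hper : ∀ p ∈ D0, 2 ^ (2 * n) ≤ 2 * (K * (A.filter (fun q => q.1 = p)).card) := by
      intro p hp
      refine le_trans (hG p.1 p.2) ?_
      apply Nat.mul_le_mul_left
      apply Nat.mul_le_mul_left
      apply Finset.card_le_card_of_injOn (fun zz => (p, zz))
      · intro zz hzz
        rw [Finset.mem_coe, Finset.mem_filter] at hzz
        rw [Finset.mem_coe, Finset.mem_filter, hAdef, Finset.mem_filter]
        rw [hD0def, Finset.mem_filter] at hp
        exact ⟨⟨Finset.mem_univ _, hp.2, hzz.2⟩, rfl⟩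
      · intro p1 _ p2 _ heq
        exact (Prod.ext_iff.1 heq).2
    calc 3 ^ n * 2 ^ (2 * n) = ∑ _p ∈ D0, 2 ^ (2 * n) := by
          rw [Finset.sum_const, smul_eq_mul, hD0card]
      _ ≤ ∑ p ∈ D0, 2 * (K * (A.filter (fun q => q.1 = p)).card) :=
          Finset.sum_le_sum hper
      _ = 2 * (K * ∑ p ∈ D0, (A.filter (fun q => q.1 = p)).card) := by
          rw [Finset.mul_sum, Finset.mul_sum]
      _ = 2 * (K * A.card) := by rw [← hAsum]
  -- bucket pigeonhole
  set m := 3 ^ (n - w) * 2 ^ w with hm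
  have hN3 : 2 * (K * (K * m)) < 3 ^ n := by
    have h1 : (2:ℕ) ^ (19 * (c + 1)) ≤ 3 ^ (12 * (c + 1)) := by
      rw [pow_mul, pow_mul]
      exact Nat.pow_le_pow_left (by norm_num) _
    have h2 : (2:ℕ) ^ (14 * c + 13) < 2 ^ (19 * (c + 1)) :=
      Nat.pow_lt_pow_right (by norm_num) (by omega)
    have h3 : (2:ℕ) ^ (14 * c + 13) < 3 ^ w := by
      rw [hw]
      calc (2:ℕ) ^ (14 * c + 13) < 2 ^ (19 * (c+1)) := h2
        _ ≤ 3 ^ (12 * (c+1)) := h1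
        _ = 3 ^ (12 * c + 12) := by ring_nf
    have he : 2 * (K * (K * m)) = 2 ^ (14 * c + 13) * 3 ^ (n - w) := by
      rw [hm, hK, hw]
      rw [show 14 * c + 13 = c + (c + ((12 * c + 12) + 1)) by ring]
      rw [pow_add, pow_add, pow_add, pow_succ]
      ring
    rw [he]
    calc 2 ^ (14 * c + 13) * 3 ^ (n - w) < 3 ^ w * 3 ^ (n - w) :=
          mul_lt_mul_of_pos_right h3 (by positivity)
      _ = 3 ^ n := by
          rw [← pow_add]
          congr 1
          omega
  -- pigeonhole over buckets (z₀, z₁, τ)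
  have htcard : (Finset.univ : Finset ((Fin n → Bool) × ((Fin n → Bool) × (Fin (2^a) × Fin (2^b))))).card
      = 2 ^ n * (2 ^ n * K) := by
    rw [Finset.card_univ, Fintype.card_prod, Fintype.card_prod, hMcard,
      Fintype.card_fun, Fintype.card_bool, Fintype.card_fin]
  have hmain : (Finset.univ : Finset ((Fin n → Bool) × ((Fin n → Bool) × (Fin (2^a) × Fin (2^b))))).card * m
      < A.card := by
    have hL : 2 * (K * ((2 ^ n * (2 ^ n * K)) * m)) < 3 ^ n * 2 ^ (2 * n) := by
      have he : 2 * (K * ((2 ^ n * (2 ^ n * K)) * m)) = (2 * (K * (K * m))) * 2 ^ (2 * n) := by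
        rw [two_mul n, pow_add]
        ring
      rw [he]
      exact mul_lt_mul_of_pos_right hN3 (by positivity)
    have hLL : 2 * (K * ((2 ^ n * (2 ^ n * K)) * m)) < 2 * (K * A.card) :=
      lt_of_lt_of_le hL htotal
    have h2K : (2 ^ n * (2 ^ n * K)) * m < A.card := by
      have hx := Nat.lt_of_mul_lt_mul_left (a := 2) hLL
      exact Nat.lt_of_mul_lt_mul_left (a := K) hx
    rw [htcard]
    exact h2K
  obtain ⟨⟨z₀, z₁, τ⟩, _, hfib⟩ :=
    Finset.exists_lt_card_fiber_of_mul_lt_card_of_maps_to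
      (f := fun q : ((Fin n → Bool) × (Fin n → Bool)) × ((Fin n → Bool) × (Fin n → Bool)) =>
        (q.2.1, q.2.2, χ q.1.1 q.1.2 q.2.1))
      (fun q _ => Finset.mem_univ _) hmain
  -- the fiber is nonempty, extract distance
  have hfibpos : 0 < (A.filter (fun q => (q.2.1, q.2.2, χ q.1.1 q.1.2 q.2.1) = (z₀, z₁, τ))).card :=
    lt_of_le_of_lt (Nat.zero_le m) hfib
  obtain ⟨q₀, hq₀⟩ := Finset.card_pos.1 hfibpos
  have hq₀' := Finset.mem_filter.1 hq₀
  have hdistz : D < hdist z₀ z₁ := by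
    have hA₀ := Finset.mem_filter.1 hq₀'.1
    obtain ⟨he1, he2, _⟩ : q₀.2.1 = z₀ ∧ q₀.2.2 = z₁ ∧ χ q₀.1.1 q₀.1.2 q₀.2.1 = τ := by
      simpa [Prod.ext_iff] using hq₀'.2
    have h9 := hA₀.2.2.2
    rw [he1, he2] at h9
    exact h9
  -- the rectangle
  set Xs := (Finset.univ : Finset (Fin n → Bool)).filter
    (fun x => mB x z₀ τ.1 = τ.2 ∧ mB x z₁ τ.1 = τ.2) with hXs
  set Ys := (Finset.univ : Finset (Fin n → Bool)).filter
    (fun y => mA y z₀ = τ.1 ∧ mA y z₁ = τ.1) with hYs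
  have hrect : m < ((Xs ×ˢ Ys).filter
      (fun p : (Fin n → Bool) × (Fin n → Bool) =>
        ∀ i, ¬(p.1 i = true ∧ p.2 i = true))).card := by
    refine lt_of_lt_of_le hfib ?_
    apply Finset.card_le_card_of_injOn (fun q => q.1)
    · intro q hq
      have hq' := Finset.mem_filter.1 hq
      have hA' := Finset.mem_filter.1 hq'.1
      obtain ⟨he1, he2, he3⟩ : q.2.1 = z₀ ∧ q.2.2 = z₁ ∧ χ q.1.1 q.1.2 q.2.1 = τ := by
        simpa [Prod.ext_iff] using hq'.2
      have hχeq := hA'.2.2.1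
      rw [he1, he2] at hχeq
      have hχ₀ : χ q.1.1 q.1.2 z₀ = τ := by rw [← he1]; exact he3
      have hχ₁ : χ q.1.1 q.1.2 z₁ = τ := by rw [← hχeq]; exact hχ₀
      rw [hχ] at hχ₀ hχ₁
      simp only [Prod.ext_iff] at hχ₀ hχ₁
      obtain ⟨ha₀, hb₀⟩ := hχ₀
      obtain ⟨ha₁, hb₁⟩ := hχ₁
      rw [ha₀] at hb₀
      rw [ha₁] at hb₁
      rw [Finset.mem_coe, Finset.mem_filter, Finset.mem_product]
      refine ⟨⟨?_, ?_⟩, hA'.2.1⟩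
      · rw [hXs, Finset.mem_filter]
        exact ⟨Finset.mem_univ _, hb₀, hb₁⟩
      · rw [hYs, Finset.mem_filter]
        exact ⟨Finset.mem_univ _, ha₀, ha₁⟩
    · intro q1 hq1 q2 hq2 heq
      rw [Finset.mem_coe, Finset.mem_filter] at hq1 hq2
      obtain ⟨h1a, h1b, _⟩ : q1.2.1 = z₀ ∧ q1.2.2 = z₁ ∧ χ q1.1.1 q1.1.2 q1.2.1 = τ := by
        simpa [Prod.ext_iff] using hq1.2
      obtain ⟨h2a, h2b, _⟩ : q2.2.1 = z₀ ∧ q2.2.2 = z₁ ∧ χ q2.1.1 q2.1.2 q2.2.1 = τ := by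
        simpa [Prod.ext_iff] using hq2.2
      apply Prod.ext heq
      apply Prod.ext
      · rw [h1a, h2a]
      · rw [h1b, h2b]
  -- choose the set W inside the difference set
  set Δ := (Finset.univ : Finset (Fin n)).filter (fun i => z₀ i ≠ z₁ i) with hΔ
  have hΔcard : D < Δ.card := hdistz
  set sT := Δ.filter (fun i => z₀ i = true) with hsT
  set sF := Δ.filter (fun i => ¬(z₀ i = true)) with hsF
  have hsTF : sT.card + sF.card = Δ.card := by
    rw [hsT, hsF]
    exact Finset.card_filter_add_card_filter_not _
  have hside : w ≤ sT.card ∨ w ≤ sF.card := by omega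
  -- helper facts about Δ membership
  have hΔmem : ∀ i ∈ Δ, z₀ i ≠ z₁ i := by
    intro i hi
    exact (Finset.mem_filter.1 hi).2
  -- main extraction, for a chosen W
  have hextract : ∀ W : Finset (Fin n), W.card = w → W ⊆ Δ →
      ∃ x y : Fin n → Bool, (x ∈ Xs) ∧ (y ∈ Ys) ∧
        (∀ i, x i = true → y i = true → i ∈ W) ∧ ∃ i₀, x i₀ = true ∧ y i₀ = true := by
    intro W hWcard _
    by_contra hcon
    have hH : ∀ x ∈ Xs, ∀ y ∈ Ys, (∀ i, x i = true → y i = true → i ∈ W) →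
        ∀ i, ¬(x i = true ∧ y i = true) := by
      intro x hx y hy hsubW i hi
      exact hcon ⟨x, y, hx, hy, hsubW, i, hi.1, hi.2⟩
    have hb := rect_bound Xs Ys W hH
    rw [hWcard] at hb
    exact absurd hrect (by rw [hm]; omega)
  -- final assembly
  rcases hside with hT | hFcase
  · obtain ⟨W, hWsub, hWcard⟩ := Finset.exists_subset_card_eq hT
    obtain ⟨x, y, hx, hy, hsubW, i₀, hxi₀, hyi₀⟩ :=
      hextract W hWcard (hWsub.trans (Finset.filter_subset _ _))
    have hxm := Finset.mem_filter.1 hx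
    have hym := Finset.mem_filter.1 hy
    have hWval : ∀ i ∈ W, z₀ i = true ∧ z₁ i = false := by
      intro i hi
      have h1 := Finset.mem_filter.1 (hWsub hi)
      have h2 := Finset.mem_filter.1 h1.1
      refine ⟨h1.2, ?_⟩
      have h3 := h2.2
      rw [h1.2] at h3
      cases hne : z₁ i
      · rfl
      · rw [hne] at h3; exact absurd rfl h3
    refine ⟨x, y, z₀, z₁, ?_, ?_, ?_⟩
    · rw [hym.2.1, hym.2.2]
    · rw [hym.2.1, hym.2.2, hxm.2.1, hxm.2.2]
    · intro hIff
      have hA1 : ∀ i, ¬(x i = true ∧ y i = true ∧ z₁ i = true) := by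
        intro i hi
        have hiW := hsubW i hi.1 hi.2.1
        have h4 := (hWval i hiW).2
        rw [h4] at hi
        exact Bool.false_ne_true hi.2.2
      have hA0 := hIff.2 hA1
      exact hA0 i₀ ⟨hxi₀, hyi₀, (hWval i₀ (hsubW i₀ hxi₀ hyi₀)).1⟩
  · obtain ⟨W, hWsub, hWcard⟩ := Finset.exists_subset_card_eq hFcase
    obtain ⟨x, y, hx, hy, hsubW, i₀, hxi₀, hyi₀⟩ :=
      hextract W hWcard (hWsub.trans (Finset.filter_subset _ _))
    have hxm := Finset.mem_filter.1 hx
    have hym := Finset.mem_filter.1 hy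
    have hWval : ∀ i ∈ W, z₀ i = false ∧ z₁ i = true := by
      intro i hi
      have h1 := Finset.mem_filter.1 (hWsub hi)
      have h2 := Finset.mem_filter.1 h1.1
      have h0 : z₀ i = false := by
        cases h : z₀ i
        · rfl
        · exact absurd h h1.2
      refine ⟨h0, ?_⟩
      have h3 := h2.2
      rw [h0] at h3
      cases hne : z₁ i
      · rw [hne] at h3; exact absurd rfl h3
      · rfl
    refine ⟨x, y, z₀, z₁, ?_, ?_, ?_⟩
    · rw [hym.2.1, hym.2.2]
    · rw [hym.2.1, hym.2.2, hxm.2.1, hxm.2.2]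
    · intro hIff
      have hA0 : ∀ i, ¬(x i = true ∧ y i = true ∧ z₀ i = true) := by
        intro i hi
        have hiW := hsubW i hi.1 hi.2.1
        have h4 := (hWval i hiW).1
        rw [h4] at hi
        exact Bool.false_ne_true hi.2.2
      have hA1 := hIff.1 hA0
      exact hA1 i₀ ⟨hxi₀, hyi₀, (hWval i₀ (hsubW i₀ hxi₀ hyi₀)).2⟩
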